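/- A graph that admits a perfect elimination ordering of its vertices is chordal, i.e., it contains no induced cycle of length at least 4. -/

import Mathlib

/-- A graph admitting a perfect elimination ordering of its vertices is chordal,
i.e. it contains no induced cycle of length at least 4 (an induced cycle of length
`m` being an embedding of the cycle graph on `m` vertices). -/
theorem stmt1 {n : ℕ} (H : SimpleGraph (Fin n)) (e : Equiv.Perm (Fin n))
    (hpeo : ∀ i : Fin n, H.IsClique {v | H.Adj v (e i) ∧ ∃ j, j < i ∧ v = e j}) :
    ∀ m : ℕ, 4 ≤ m → IsEmpty (SimpleGraph.cycleGraph m ↪g H) := by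
  intro m hm
  obtain ⟨m', rfl⟩ : ∃ m', m = m' + 2 := ⟨m - 2, by omega⟩
  have hm' : 2 ≤ m' := by omega
  constructor
  intro f
  obtain ⟨k, -, hk⟩ := Finset.exists_max_image (Finset.univ : Finset (Fin (m' + 2)))
    (fun k => e.symm (f k)) ⟨0, Finset.mem_univ _⟩
  set i := e.symm (f k) with hi
  have hfk : e i = f k := e.apply_symm_apply _
  -- numeral facts in `Fin (m'+2)`
  have h10 : (1 : Fin (m' + 2)) ≠ 0 := by simp
  have h20 : (2 : Fin (m' + 2)) ≠ 0 := by
    rw [Ne, Fin.ext_iff, Fin.coe_ofNat_eq_mod, Fin.val_zero,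
      Nat.mod_eq_of_lt (by omega)]; omega
  have h30 : (3 : Fin (m' + 2)) ≠ 0 := by
    rw [Ne, Fin.ext_iff, Fin.coe_ofNat_eq_mod, Fin.val_zero,
      Nat.mod_eq_of_lt (by omega)]; omega
  have hkm : k - 1 ≠ k := fun hh => h10 (by open Fin.CommRing in linear_combination -hh)
  have hkp : k + 1 ≠ k := fun hh => h10 (by open Fin.CommRing in linear_combination hh)
  have hmp : k - 1 ≠ k + 1 := fun hh => h20 (by open Fin.CommRing in linear_combination -hh)
  -- adjacencies in the cycle graph
  have hadj1 : (SimpleGraph.cycleGraph (m' + 2)).Adj (k - 1) k :=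
    SimpleGraph.cycleGraph_adj.mpr (Or.inr (sub_sub_cancel k 1))
  have hadj2 : (SimpleGraph.cycleGraph (m' + 2)).Adj k (k + 1) :=
    SimpleGraph.cycleGraph_adj.mpr (Or.inr (add_sub_cancel_left k 1))
  have hnadj : ¬ (SimpleGraph.cycleGraph (m' + 2)).Adj (k - 1) (k + 1) := by
    rw [SimpleGraph.cycleGraph_adj]
    push_neg
    refine ⟨fun hh => h30 (by open Fin.CommRing in linear_combination -hh),
      fun hh => h10 (by open Fin.CommRing in linear_combination hh)⟩
  -- the two cycle-neighbours of `f k` lie in the clique of earlier neighbours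
  have hmem : ∀ a : Fin (m' + 2), (SimpleGraph.cycleGraph (m' + 2)).Adj a k →
      f a ∈ {v | H.Adj v (e i) ∧ ∃ j, j < i ∧ v = e j} := by
    intro a ha
    refine ⟨by rw [hfk]; exact f.map_adj_iff.mpr ha, e.symm (f a), ?_, (e.apply_symm_apply _).symm⟩
    refine lt_of_le_of_ne (hk a (Finset.mem_univ a)) fun hic => ?_
    have : f a = f k := by
      have := congrArg e hic
      rwa [e.apply_symm_apply, hfk] at this
    exact ha.ne (f.injective this)
  have hu := hmem (k - 1) hadj1
  have hw := hmem (k + 1) (hadj2.symm)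
  have hne : f (k - 1) ≠ f (k + 1) := fun hh => hmp (f.injective hh)
  exact hnadj (f.map_adj_iff.mp (hpeo i hu hw hne))
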